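/- arXiv:math/9403210 — 2 statements merged into one kernel-verified Lean document; each statement's English description precedes it below -/
import Mathlib

section
/- A real Banach space X has the λ-bounded approximation property (λ-BAP) if and only if X has the approximation property (AP) and the λ-bounded compact approximation property (λ-BCAP). -/
set_option maxSynthPendingDepth 3

open Filter Topology Metric NormedSpace Function

/-- `u` is a finite-rank operator: its range is finite-dimensional. -/
def FinRankOp {X Y : Type*} [NormedAddCommGroup X] [NormedSpace ℝ X]
    [NormedAddCommGroup Y] [NormedSpace ℝ Y] (u : X →L[ℝ] Y) : Prop :=
  FiniteDimensional ℝ (LinearMap.range (u : X →ₗ[ℝ] Y))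

/-- `u` is approximable: a limit in operator norm of finite-rank operators. -/
def ApproxOp {X Y : Type*} [NormedAddCommGroup X] [NormedSpace ℝ X]
    [NormedAddCommGroup Y] [NormedSpace ℝ Y] (u : X →L[ℝ] Y) : Prop :=
  u ∈ closure {f : X →L[ℝ] Y | FinRankOp f}

/-- `u` is a compact operator: it maps the closed unit ball to a relatively compact set. -/
def CompactOp {X Y : Type*} [NormedAddCommGroup X] [NormedSpace ℝ X]
    [NormedAddCommGroup Y] [NormedSpace ℝ Y] (u : X →L[ℝ] Y) : Prop :=
  IsCompact (closure (u '' Metric.closedBall 0 1))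

/-- `Y` has the approximation property (AP). -/
def HasAP (Y : Type*) [NormedAddCommGroup Y] [NormedSpace ℝ Y] : Prop :=
  ∀ K : Set Y, IsCompact K → ∀ ε : ℝ, 0 < ε →
    ∃ u : Y →L[ℝ] Y, FinRankOp u ∧ ∀ x ∈ K, ‖u x - x‖ < ε

/-- `Y` has the λ-bounded approximation property (λ-BAP). -/
def HasBAP (Y : Type*) [NormedAddCommGroup Y] [NormedSpace ℝ Y] (l : ℝ) : Prop :=
  ∀ K : Set Y, IsCompact K → ∀ ε : ℝ, 0 < ε →
    ∃ u : Y →L[ℝ] Y, FinRankOp u ∧ ‖u‖ ≤ l ∧ ∀ x ∈ K, ‖u x - x‖ < ε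

/-- `Y` has the λ-bounded compact approximation property (λ-BCAP). -/
def HasBCAP (Y : Type*) [NormedAddCommGroup Y] [NormedSpace ℝ Y] (l : ℝ) : Prop :=
  ∀ K : Set Y, IsCompact K → ∀ ε : ℝ, 0 < ε →
    ∃ u : Y →L[ℝ] Y, CompactOp u ∧ ‖u‖ ≤ l ∧ ∀ x ∈ K, ‖u x - x‖ < ε

/-- A finite-rank operator is compact. -/
lemma finRankOp_compactOp {X Y : Type*} [NormedAddCommGroup X] [NormedSpace ℝ X]
    [NormedAddCommGroup Y] [NormedSpace ℝ Y] {u : X →L[ℝ] Y} (h : FinRankOp u) :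
    CompactOp u := by
  have : FiniteDimensional ℝ (LinearMap.range (u : X →ₗ[ℝ] Y)) := h
  set V := LinearMap.range (u : X →ₗ[ℝ] Y)
  set g : X →L[ℝ] V := u.codRestrict V (fun x => LinearMap.mem_range_self _ x)
  have hb : Bornology.IsBounded (g '' Metric.closedBall 0 1) :=
    (g.lipschitz).isBounded_image (Metric.isBounded_closedBall)
  have hc : IsCompact (closure (g '' Metric.closedBall 0 1)) := hb.isCompact_closure
  have hc2 : IsCompact ((Subtype.val : V → Y) '' closure (g '' Metric.closedBall 0 1)) :=
    hc.image continuous_subtype_val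
  refine hc2.of_isClosed_subset isClosed_closure ?_
  refine closure_minimal ?_ hc2.isClosed
  intro y hy
  obtain ⟨x, hx, rfl⟩ := hy
  exact ⟨g x, subset_closure ⟨x, hx, rfl⟩, rfl⟩

/-- AP gives finite-rank approximation of compact operators in operator norm. -/
lemma hasAP_approx {X : Type*} [NormedAddCommGroup X] [NormedSpace ℝ X]
    (hap : HasAP X) {u : X →L[ℝ] X} (hu : CompactOp u) {δ : ℝ} (hδ : 0 < δ) :
    ∃ w : X →L[ℝ] X, FinRankOp w ∧ ‖w - u‖ ≤ δ := by
  obtain ⟨v, hvfr, hv⟩ := hap _ hu δ hδ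
  refine ⟨v.comp u, ?_, ?_⟩
  · have : FiniteDimensional ℝ (LinearMap.range (v : X →ₗ[ℝ] X)) := hvfr
    have hle : LinearMap.range ((v.comp u : X →L[ℝ] X) : X →ₗ[ℝ] X) ≤ LinearMap.range (v : X →ₗ[ℝ] X) := by
      rintro y ⟨x, rfl⟩
      exact ⟨u x, rfl⟩
    exact Submodule.finiteDimensional_of_le hle
  · refine ContinuousLinearMap.opNorm_le_bound _ hδ.le fun x => ?_
    rcases eq_or_ne x 0 with rfl | hx
    · simp
    · have hnx : (0:ℝ) < ‖x‖ := norm_pos_iff.mpr hx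
      set y := ‖x‖⁻¹ • x with hy
      have hy1 : ‖y‖ = 1 := by
        simp [hy, norm_smul, abs_of_nonneg (inv_nonneg.mpr hnx.le),
          inv_mul_cancel₀ hnx.ne']
      have hyb : y ∈ Metric.closedBall (0:X) 1 := by
        simp [hy1]
      have hmem : u y ∈ closure (u '' Metric.closedBall 0 1) :=
        subset_closure ⟨y, hyb, rfl⟩
      have := (hv (u y) hmem).le
      have hxy : x = ‖x‖ • y := by
        rw [hy, smul_smul, mul_inv_cancel₀ hnx.ne', one_smul]
      calc ‖(v.comp u - u) x‖ = ‖v (u x) - u x‖ := by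
            simp [ContinuousLinearMap.sub_apply]
        _ = ‖x‖ * ‖v (u y) - u y‖ := by
            rw [hxy, map_smul, map_smul, ← smul_sub, norm_smul, Real.norm_eq_abs,
              abs_of_nonneg hnx.le, norm_smul, Real.norm_eq_abs, abs_of_nonneg hnx.le,
              hy1, mul_one]
        _ ≤ ‖x‖ * δ := by nlinarith
        _ = δ * ‖x‖ := mul_comm _ _

/-- `X` has λ-BAP iff `X` has AP and λ-BCAP. -/
theorem bap_iff_ap_and_bcap (X : Type u) [NormedAddCommGroup X] [NormedSpace ℝ X]
    [CompleteSpace X] (l : ℝ) (hl : 1 ≤ l) :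
    HasBAP X l ↔ (HasAP X ∧ HasBCAP X l) := by
  constructor
  · intro h
    constructor
    · intro K hK ε hε
      obtain ⟨u, hfr, -, hu⟩ := h K hK ε hε
      exact ⟨u, hfr, hu⟩
    · intro K hK ε hε
      obtain ⟨u, hfr, hn, hu⟩ := h K hK ε hε
      exact ⟨u, finRankOp_compactOp hfr, hn, hu⟩
  · rintro ⟨hap, hbcap⟩ K hK ε hε
    obtain ⟨u, hcu, hnu, hu⟩ := hbcap K hK (ε/2) (half_pos hε)
    obtain ⟨R₀, hR₀⟩ := hK.isBounded.exists_norm_le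
    set R : ℝ := max R₀ 1 with hRdef
    have hR1 : (1:ℝ) ≤ R := le_max_right _ _
    have hRpos : (0:ℝ) < R := lt_of_lt_of_le one_pos hR1
    have hKR : ∀ x ∈ K, ‖x‖ ≤ R := fun x hx => le_trans (hR₀ x hx) (le_max_left _ _)
    set δ : ℝ := ε / (8 * R) with hδdef
    have hδ : 0 < δ := div_pos hε (by positivity)
    obtain ⟨w, hwfr, hw⟩ := hasAP_approx hap hcu hδ
    have hlpos : (0:ℝ) < l := lt_of_lt_of_le one_pos hl
    have hlδ : (0:ℝ) < l + δ := by linarith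
    set c : ℝ := l / (l + δ) with hcdef
    have hc0 : 0 < c := div_pos hlpos hlδ
    have hc1 : c ≤ 1 := by
      rw [hcdef, div_le_one hlδ]; linarith
    have hcl : c * (l + δ) = l := div_mul_cancel₀ _ hlδ.ne'
    have h1c : (1 - c) * (l + δ) = δ := by
      rw [sub_mul, one_mul, hcl]; ring
    have hwn : ‖w‖ ≤ l + δ := by
      have huw : u + (w - u) = w := by abel
      calc ‖w‖ = ‖u + (w - u)‖ := by rw [huw]
        _ ≤ ‖u‖ + ‖w - u‖ := norm_add_le _ _
        _ ≤ l + δ := add_le_add hnu hw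
    refine ⟨c • w, ?_, ?_, ?_⟩
    · have : FiniteDimensional ℝ (LinearMap.range (w : X →ₗ[ℝ] X)) := hwfr
      have hle : LinearMap.range ((c • w : X →L[ℝ] X) : X →ₗ[ℝ] X) ≤ LinearMap.range (w : X →ₗ[ℝ] X) := by
        rintro y ⟨x, rfl⟩
        exact ⟨c • x, by simp⟩
      exact Submodule.finiteDimensional_of_le hle
    · calc ‖c • w‖ = c * ‖w‖ := by
            rw [norm_smul, Real.norm_eq_abs, abs_of_nonneg hc0.le]
        _ ≤ c * (l + δ) := by nlinarith
        _ = l := hcl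
    · intro x hx
      have hxR : ‖x‖ ≤ R := hKR x hx
      have hδR : δ * R = ε / 8 := by
        rw [hδdef]; field_simp
      have e1 : ‖w x‖ ≤ (l + δ) * ‖x‖ :=
        le_trans (w.le_opNorm x) (by nlinarith [norm_nonneg x])
      have e2 : ‖c • w x - w x‖ ≤ ε / 8 := by
        have heq : c • w x - w x = (c - 1) • w x := by
          rw [sub_smul, one_smul]
        rw [heq, norm_smul, Real.norm_eq_abs, abs_of_nonpos (by linarith)]
        have : (1 - c) * ‖w x‖ ≤ δ * ‖x‖ := by nlinarith [norm_nonneg (w x), norm_nonneg x]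
        nlinarith
      have e3 : ‖w x - u x‖ ≤ ε / 8 := by
        have := (w - u).le_opNorm x
        have h' : ‖(w - u) x‖ ≤ δ * ‖x‖ := le_trans this (by nlinarith [norm_nonneg x])
        have hx' : ‖(w - u) x‖ = ‖w x - u x‖ := by simp
        nlinarith
      have e4 : ‖u x - x‖ < ε / 2 := hu x hx
      calc ‖(c • w) x - x‖ = ‖(c • w x - w x) + (w x - u x) + (u x - x)‖ := by
            rw [ContinuousLinearMap.smul_apply]; congr 1; abel
        _ ≤ ‖(c • w x - w x) + (w x - u x)‖ + ‖u x - x‖ := norm_add_le _ _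
        _ ≤ ‖c • w x - w x‖ + ‖w x - u x‖ + ‖u x - x‖ := by
            have := norm_add_le (c • w x - w x) (w x - u x); linarith
        _ < ε := by linarith
end

section
/- Let (X_n)_{n∈ℕ} be a sequence of real Banach spaces each having the metric compact approximation property (MCAP). Then the ℓ₂-direct sum (Σ_{n=1}^∞ ⊕ X_n)_{ℓ₂} — the space of all sequences (x_n) with x_n ∈ X_n and Σ_n ‖x_n‖² < ∞, normed by (Σ_n ‖x_n‖²)^{1/2} — also has MCAP. -/
set_option maxSynthPendingDepth 3

open Filter Topology Metric NormedSpace Function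

/-- `Y` has the metric compact approximation property (MCAP), i.e. 1-BCAP. -/
def HasMCAP (Y : Type*) [NormedAddCommGroup Y] [NormedSpace ℝ Y] : Prop :=
  HasBCAP Y 1

set_option linter.unusedSectionVars false
open scoped ENNReal

section Helpers

variable {X : ℕ → Type*} [∀ n, NormedAddCommGroup (X n)] [∀ n, NormedSpace ℝ (X n)]

lemma h2pos : (0:ℝ) < (2:ℝ≥0∞).toReal := by norm_num

lemma h2eq : (2:ℝ≥0∞).toReal = 2 := by norm_num

/-- Evaluation at a coordinate, as a continuous linear map. -/
noncomputable def evalCLM (n : ℕ) : lp X 2 →L[ℝ] X n :=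
  LinearMap.mkContinuous
    { toFun := fun f => f n
      map_add' := fun f g => rfl
      map_smul' := fun c f => rfl }
    1 (fun f => by show ‖f n‖ ≤ 1 * ‖f‖; simpa using lp.norm_apply_le_norm two_ne_zero f n)

@[simp] lemma evalCLM_apply (n : ℕ) (f : lp X 2) : evalCLM n f = f n := rfl

lemma lp_single_add (n : ℕ) (a b : X n) :
    lp.single 2 n (a + b) = lp.single 2 n a + lp.single 2 n b := by
  apply lp.ext; funext j
  rw [lp.coeFn_add]
  by_cases hj : j = n
  · subst hj; simp [lp.single_apply_self]
  · simp [lp.single_apply_ne _ _ _ hj]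

lemma norm_lp_single (n : ℕ) (a : X n) : ‖lp.single 2 n a‖ = ‖a‖ := by
  have := lp.norm_single (E := X) (p := 2) (by norm_num) n a
  simpa using this

/-- `lp.single` as a continuous linear map. -/
noncomputable def singleCLM (n : ℕ) : X n →L[ℝ] lp X 2 :=
  LinearMap.mkContinuous
    { toFun := fun a => lp.single 2 n a
      map_add' := fun a b => lp_single_add n a b
      map_smul' := fun c a => by simp }
    1 (fun a => by simp [norm_lp_single])

@[simp] lemma singleCLM_apply (n : ℕ) (a : X n) : singleCLM n a = lp.single 2 n a := rfl

lemma sum_single_apply (s : Finset ℕ) (g : ∀ n, X n) (j : ℕ) :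
    (↑(∑ i ∈ s, lp.single 2 i (g i)) : ∀ n, X n) j = if j ∈ s then g j else 0 := by
  rw [lp.coeFn_sum, Finset.sum_apply]
  simp [lp.single_apply, Finset.sum_dite_eq]

end Helpers

section Trunc

variable {X : ℕ → Type*} [∀ n, NormedAddCommGroup (X n)] [∀ n, NormedSpace ℝ (X n)]

/-- Truncation to a finite set of coordinates. -/
noncomputable def trunc (s : Finset ℕ) (f : lp X 2) : lp X 2 :=
  ∑ i ∈ s, lp.single 2 i (f i)

lemma trunc_apply (s : Finset ℕ) (f : lp X 2) (j : ℕ) :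
    (↑(trunc s f) : ∀ n, X n) j = if j ∈ s then f j else 0 :=
  sum_single_apply s _ j

lemma trunc_sub (s : Finset ℕ) (f g : lp X 2) :
    trunc s (f - g) = trunc s f - trunc s g := by
  apply lp.ext; funext j
  rw [lp.coeFn_sub]
  simp only [Pi.sub_apply, trunc_apply, lp.coeFn_sub]
  split_ifs with hj <;> simp

lemma norm_sub_trunc_le (s : Finset ℕ) (f : lp X 2) : ‖f - trunc s f‖ ≤ ‖f‖ := by
  rw [← Real.rpow_le_rpow_iff (lp.norm_nonneg' _) (lp.norm_nonneg' _) h2pos]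
  have hc := lp.norm_compl_sum_single h2pos f s
  rw [trunc, hc]
  have : 0 ≤ ∑ i ∈ s, ‖f i‖ ^ (2:ℝ≥0∞).toReal :=
    Finset.sum_nonneg fun i _ => Real.rpow_nonneg (norm_nonneg _) _
  linarith

lemma exists_trunc_small {K : Set (lp X 2)} (hK : IsCompact K) {ε : ℝ} (hε : 0 < ε) :
    ∃ N : ℕ, ∀ x ∈ K, ‖x - trunc (Finset.range N) x‖ < ε := by
  classical
  obtain ⟨t, ht⟩ := hK.elim_finite_subcover (fun y : lp X 2 => ball y (ε/2))
    (fun y => isOpen_ball) (fun x hx => Set.mem_iUnion.2 ⟨x, mem_ball_self (half_pos hε)⟩)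
  have key : ∀ y : lp X 2, ∃ s₀ : Finset ℕ, ∀ s : Finset ℕ, s₀ ⊆ s →
      ‖y - trunc s y‖ < ε/2 := by
    intro y
    have hy : HasSum (fun i : ℕ => lp.single 2 i (y i)) y :=
      lp.hasSum_single (by norm_num) y
    have hev := Metric.tendsto_nhds.1 hy (ε/2) (half_pos hε)
    rw [SummationFilter.unconditional_filter, Filter.eventually_atTop] at hev
    obtain ⟨s₀, hs₀⟩ := hev
    exact ⟨s₀, fun s hs => by
      have := hs₀ s hs
      rwa [dist_eq_norm, ← norm_neg, neg_sub] at this⟩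
  choose F hF using key
  obtain ⟨N, hNsub⟩ := (t.biUnion F).exists_nat_subset_range
  refine ⟨N, fun x hx => ?_⟩
  obtain ⟨y, hyt, hxy⟩ := Set.mem_iUnion₂.1 (ht hx)
  have hxy' : ‖x - y‖ < ε/2 := by rwa [mem_ball, dist_eq_norm] at hxy
  have hy : ‖y - trunc (Finset.range N) y‖ < ε/2 :=
    hF y (Finset.range N) (le_trans (Finset.subset_biUnion_of_mem F hyt) hNsub)
  have hdecomp : x - trunc (Finset.range N) x =
      ((x - y) - trunc (Finset.range N) (x - y)) + (y - trunc (Finset.range N) y) := by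
    rw [trunc_sub]; abel
  calc ‖x - trunc (Finset.range N) x‖
      ≤ ‖(x - y) - trunc (Finset.range N) (x - y)‖ + ‖y - trunc (Finset.range N) y‖ := by
        rw [hdecomp]; exact norm_add_le _ _
    _ ≤ ‖x - y‖ + ‖y - trunc (Finset.range N) y‖ := by
        have := norm_sub_trunc_le (Finset.range N) (x - y); linarith
    _ < ε/2 + ε/2 := by linarith
    _ = ε := by ring

end Trunc


section Diag

variable {X : ℕ → Type*} [∀ n, NormedAddCommGroup (X n)] [∀ n, NormedSpace ℝ (X n)]

lemma memℓp_diag (u : ∀ n, X n →L[ℝ] X n) (hu : ∀ n, ‖u n‖ ≤ 1) (f : lp X 2) :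
    Memℓp (fun n => u n (f n)) 2 := by
  apply memℓp_gen
  apply Summable.of_nonneg_of_le (fun n => Real.rpow_nonneg (norm_nonneg _) _)
    (fun n => ?_) ((lp.memℓp f).summable h2pos)
  apply Real.rpow_le_rpow (norm_nonneg _) ?_ h2pos.le
  calc ‖u n (f n)‖ ≤ ‖u n‖ * ‖f n‖ := (u n).le_opNorm _
    _ ≤ 1 * ‖f n‖ := by have := norm_nonneg (f n); nlinarith [hu n]
    _ = ‖f n‖ := one_mul _

lemma diag_norm_le (u : ∀ n, X n →L[ℝ] X n) (hu : ∀ n, ‖u n‖ ≤ 1) (f : lp X 2) :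
    ‖(⟨fun n => u n (f n), memℓp_diag u hu f⟩ : lp X 2)‖ ≤ ‖f‖ := by
  apply lp.norm_le_of_tsum_le h2pos (lp.norm_nonneg' f)
  rw [lp.norm_rpow_eq_tsum h2pos f]
  apply Summable.tsum_le_tsum (fun n => ?_) ((lp.memℓp (⟨fun n => u n (f n), memℓp_diag u hu f⟩ : lp X 2)).summable h2pos) ((lp.memℓp f).summable h2pos)
  · apply Real.rpow_le_rpow (norm_nonneg _) ?_ h2pos.le
    calc ‖u n (f n)‖ ≤ ‖u n‖ * ‖f n‖ := (u n).le_opNorm _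
      _ ≤ 1 * ‖f n‖ := by have := norm_nonneg (f n); nlinarith [hu n]
      _ = ‖f n‖ := one_mul _

/-- The diagonal operator built from a family of norm‑`≤ 1` operators. -/
noncomputable def diagCLM (u : ∀ n, X n →L[ℝ] X n) (hu : ∀ n, ‖u n‖ ≤ 1) :
    lp X 2 →L[ℝ] lp X 2 :=
  LinearMap.mkContinuous
    { toFun := fun f => (⟨fun n => u n (f n), memℓp_diag u hu f⟩ : lp X 2)
      map_add' := fun f g => by
        apply lp.ext; funext j
        simp only [lp.coeFn_add]
        simp only [Pi.add_apply]
        show u j ((f + g) j) = u j (f j) + u j (g j)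
        rw [lp.coeFn_add, Pi.add_apply, map_add]
      map_smul' := fun c f => by
        apply lp.ext; funext j
        simp only [lp.coeFn_smul]
        simp only [Pi.smul_apply, RingHom.id_apply]
        show u j ((c • f) j) = c • u j (f j)
        rw [lp.coeFn_smul, Pi.smul_apply, map_smul] }
    1 (fun f => by simpa using diag_norm_le u hu f)

@[simp] lemma diagCLM_apply (u : ∀ n, X n →L[ℝ] X n) (hu : ∀ n, ‖u n‖ ≤ 1)
    (f : lp X 2) (j : ℕ) : (↑(diagCLM u hu f) : ∀ n, X n) j = u j (f j) := rfl

lemma diagCLM_norm_le (u : ∀ n, X n →L[ℝ] X n) (hu : ∀ n, ‖u n‖ ≤ 1) :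
    ‖diagCLM u hu‖ ≤ 1 :=
  LinearMap.mkContinuous_norm_le _ zero_le_one _

end Diag


section Compactness

variable {A B : Type*} [NormedAddCommGroup A] [NormedSpace ℝ A]
  [NormedAddCommGroup B] [NormedSpace ℝ B]

lemma compactOp_iff (u : A →L[ℝ] B) : CompactOp u ↔ IsCompactOperator ⇑u :=
  (isCompactOperator_iff_isCompact_closure_image_closedBall (𝕜₁ := ℝ)
    (u : A →ₗ[ℝ] B) one_pos).symm

lemma isCompactOperator_sum {ι : Type*} (s : Finset ι) (F : ι → (A →L[ℝ] B))
    (h : ∀ i ∈ s, IsCompactOperator ⇑(F i)) :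
    IsCompactOperator ⇑(∑ i ∈ s, F i) := by
  classical
  induction s using Finset.induction with
  | empty => simpa using isCompactOperator_zero
  | @insert a s ha ih =>
    rw [Finset.sum_insert ha]
    have hc : ⇑(F a + ∑ x ∈ s, F x) = ⇑(F a) + ⇑(∑ x ∈ s, F x) := rfl
    rw [hc]
    exact (h a (Finset.mem_insert_self a s)).add
      (ih fun i hi => h i (Finset.mem_insert_of_mem hi))

end Compactness

/-- The ℓ₂-direct sum of a sequence of Banach spaces with MCAP has MCAP.  Here
`lp X 2` is the space of sequences `(x n)` with `x n ∈ X n` and `∑ ‖x n‖² < ∞`,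
with norm `(∑ ‖x n‖²)^(1/2)`. -/
theorem mcap_of_l2_sum (X : ℕ → Type u) [∀ n, NormedAddCommGroup (X n)]
    [∀ n, NormedSpace ℝ (X n)] [∀ n, CompleteSpace (X n)]
    (h : ∀ n, HasMCAP (X n)) : HasMCAP (lp X 2) := by
  intro K hK ε hε
  classical
  obtain ⟨N, hN⟩ := exists_trunc_small hK (show (0:ℝ) < ε/8 by linarith)
  set δ : ℝ := ε / (2 * (N + 1)) with hδdef
  have hδ : 0 < δ := by positivity
  have hKn : ∀ n, IsCompact ((fun f : lp X 2 => f n) '' K) := fun n =>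
    hK.image (evalCLM (X := X) n).continuous
  choose v hv1 hv2 hv3 using fun n => h n _ (hKn n) δ hδ
  set w : ∀ n, X n →L[ℝ] X n := fun n => if n ∈ Finset.range N then v n else 0 with hwdef
  have hw1 : ∀ n, ‖w n‖ ≤ 1 := by
    intro n; rw [hwdef]; dsimp only
    split_ifs with hn
    · exact hv2 n
    · simp
  have hwcoord : ∀ n ∈ Finset.range N, w n = v n := by
    intro n hn; rw [hwdef]; dsimp only; rw [if_pos hn]
  have hwzero : ∀ n, n ∉ Finset.range N → w n = 0 := by
    intro n hn; rw [hwdef]; dsimp only; rw [if_neg hn]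
  refine ⟨diagCLM w hw1, ?_, ?_, ?_⟩
  · -- compactness
    rw [compactOp_iff]
    have heq : ⇑(diagCLM w hw1) =
        ⇑(∑ n ∈ Finset.range N,
          (singleCLM (X := X) n).comp ((w n).comp (evalCLM (X := X) n))) := by
      funext f
      apply lp.ext; funext j
      have hsum : (∑ n ∈ Finset.range N,
            (singleCLM (X := X) n).comp ((w n).comp (evalCLM (X := X) n))) f
          = ∑ n ∈ Finset.range N, lp.single 2 n (w n (f n)) := by
        rw [ContinuousLinearMap.sum_apply]; rfl
      rw [hsum, sum_single_apply]
      show w j (f j) = if j ∈ Finset.range N then w j (f j) else 0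
      by_cases hj : j ∈ Finset.range N
      · rw [if_pos hj]
      · rw [if_neg hj, hwzero j hj]; simp
    rw [heq]
    apply isCompactOperator_sum
    intro n hn
    have hcu : IsCompactOperator ⇑(w n) := by
      rw [hwcoord n hn]; exact (compactOp_iff _).1 (hv1 n)
    have h1 : IsCompactOperator (⇑(w n) ∘ ⇑(evalCLM (X := X) n)) :=
      hcu.comp_clm (evalCLM (X := X) n)
    exact h1.clm_comp (singleCLM (X := X) n)
  · exact diagCLM_norm_le w hw1
  · -- approximation
    intro x hx
    have htail : ‖x - trunc (Finset.range N) x‖ < ε/8 := hN x hx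
    have hTz : ∀ z : lp X 2, ‖diagCLM w hw1 z‖ ≤ ‖z‖ := fun z => diag_norm_le w hw1 z
    have hrepr : diagCLM w hw1 (trunc (Finset.range N) x) - trunc (Finset.range N) x
        = ∑ n ∈ Finset.range N, lp.single 2 n (w n (x n) - x n) := by
      apply lp.ext; funext j
      rw [lp.coeFn_sub]
      simp only [Pi.sub_apply]
      rw [sum_single_apply]
      show w j ((trunc (Finset.range N) x : lp X 2) j) - (trunc (Finset.range N) x : lp X 2) j
          = if j ∈ Finset.range N then w j (x j) - x j else 0
      by_cases hj : j ∈ Finset.range N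
      · rw [trunc_apply, if_pos hj, if_pos hj]
      · rw [trunc_apply, if_neg hj, if_neg hj, map_zero, sub_zero]
    have hmain : ‖diagCLM w hw1 (trunc (Finset.range N) x) - trunc (Finset.range N) x‖ ≤ ε/2 := by
      rw [hrepr]
      rw [← Real.rpow_le_rpow_iff (lp.norm_nonneg' _) (by linarith : (0:ℝ) ≤ ε/2) h2pos]
      rw [lp.norm_sum_single (E := X) h2pos (fun n => w n (x n) - x n) (Finset.range N)]
      have hbound : ∀ n ∈ Finset.range N, ‖w n (x n) - x n‖ < δ := by
        intro n hn
        rw [hwcoord n hn]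
        exact hv3 n (x n) ⟨x, hx, rfl⟩
      calc ∑ n ∈ Finset.range N, ‖w n (x n) - x n‖ ^ (2:ℝ≥0∞).toReal
          ≤ ∑ _n ∈ Finset.range N, δ ^ (2:ℝ≥0∞).toReal :=
            Finset.sum_le_sum fun n hn =>
              Real.rpow_le_rpow (norm_nonneg _) (le_of_lt (hbound n hn)) h2pos.le
        _ = (N : ℝ) * δ ^ (2:ℝ≥0∞).toReal := by
            simp [Finset.sum_const, Finset.card_range, nsmul_eq_mul]
        _ ≤ (ε/2) ^ (2:ℝ≥0∞).toReal := by
            have key : ∀ c : ℝ, c ^ (2:ℝ≥0∞).toReal = c * c := fun c => by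
              rw [h2eq, show (2:ℝ) = ((2:ℕ):ℝ) by norm_num, Real.rpow_natCast]; ring
            rw [key, key]
            have hn0 : (0:ℝ) ≤ (N:ℝ) := Nat.cast_nonneg N
            have hn1 : (0:ℝ) < (N:ℝ) + 1 := by linarith
            have hε2 : ε/2 = δ * ((N:ℝ)+1) := by
              rw [hδdef]; field_simp
            rw [hε2]
            nlinarith [sq_nonneg δ, mul_nonneg (mul_nonneg hδ.le hδ.le) hn0,
              mul_nonneg (mul_nonneg (mul_nonneg hδ.le hδ.le) hn0) hn0]
    have hdec : diagCLM w hw1 x - x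
        = (diagCLM w hw1 (trunc (Finset.range N) x) - trunc (Finset.range N) x)
          + (diagCLM w hw1 (x - trunc (Finset.range N) x) - (x - trunc (Finset.range N) x)) := by
      rw [map_sub]; abel
    calc ‖diagCLM w hw1 x - x‖
        ≤ ‖diagCLM w hw1 (trunc (Finset.range N) x) - trunc (Finset.range N) x‖
          + ‖diagCLM w hw1 (x - trunc (Finset.range N) x) - (x - trunc (Finset.range N) x)‖ := by
          rw [hdec]; exact norm_add_le _ _
      _ ≤ ε/2 + (‖diagCLM w hw1 (x - trunc (Finset.range N) x)‖
            + ‖x - trunc (Finset.range N) x‖) := by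
          have := norm_sub_le (diagCLM w hw1 (x - trunc (Finset.range N) x))
            (x - trunc (Finset.range N) x)
          linarith
      _ ≤ ε/2 + 2 * ‖x - trunc (Finset.range N) x‖ := by
          have := hTz (x - trunc (Finset.range N) x); linarith
      _ < ε := by linarith
end
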